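/- Let z be a word in a free monoid A*. If z has periods u and v such that |z| ≥ |u| + |v|, then z has a period w such that u = w^s and v = w^t for some natural numbers s, t. -/

import Mathlib

/-- `n`-th power of a word in the free monoid of lists. -/
def listPow {A : Type*} (v : List A) (n : ℕ) : List A := (List.replicate n v).flatten

/-- `v` is a period of `u`: for some `n ≥ 1`, `v^n` is a prefix of `u`
and `u` is a prefix of `v^(n+1)`. -/
def IsPeriodWord {A : Type*} (v u : List A) : Prop :=
  ∃ n : ℕ, 1 ≤ n ∧ listPow v n <+: u ∧ u <+: listPow v (n + 1)

namespace PeriodicityAux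

variable {A : Type*}

/-- Combinatorial period of length `p`. -/
def HasPer (z : List A) (p : ℕ) : Prop :=
  ∀ i : ℕ, i + p < z.length → z[i]? = z[i + p]?

lemma listPow_succ (v : List A) (n : ℕ) : listPow v (n + 1) = v ++ listPow v n := by
  simp [listPow, List.replicate_succ]

lemma listPow_length (v : List A) (n : ℕ) : (listPow v n).length = n * v.length := by
  induction n with
  | zero => simp [listPow]
  | succ m ih => rw [listPow_succ, List.length_append, ih, Nat.succ_mul]; omega

lemma listPow_add (v : List A) (a b : ℕ) :
    listPow v (a + b) = listPow v a ++ listPow v b := by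
  induction a with
  | zero => simp [listPow]
  | succ k ih =>
    rw [Nat.succ_add, listPow_succ, listPow_succ, ih, List.append_assoc]

lemma listPow_prefix_mono (v : List A) {a b : ℕ} (h : a ≤ b) :
    listPow v a <+: listPow v b := by
  refine ⟨listPow v (b - a), ?_⟩
  rw [← listPow_add, Nat.add_sub_cancel' h]

lemma listPow_one (v : List A) : listPow v 1 = v := by simp [listPow]

lemma listPow_nil (n : ℕ) : listPow ([] : List A) n = [] := by
  simp [listPow]

lemma getElem?_listPow (v : List A) (m i : ℕ) (h : i < m * v.length) :
    (listPow v m)[i]? = v[i % v.length]? := by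
  induction m generalizing i with
  | zero => omega
  | succ k ih =>
    rw [listPow_succ, List.getElem?_append]
    by_cases hc : i < v.length
    · simp [hc, Nat.mod_eq_of_lt hc]
    · push_neg at hc
      have hk : i - v.length < k * v.length := by
        have : (k + 1) * v.length = k * v.length + v.length := by ring
        omega
      simp only [hc, if_neg (by omega : ¬ i < v.length)]
      rw [ih _ hk, ← Nat.mod_eq_sub_mod hc]

/-- A prefix of `listPow v m` has period `v.length`. -/
lemma hasPer_of_prefix_listPow {z v : List A} {m : ℕ}
    (h : z <+: listPow v m) : HasPer z v.length := by
  intro i hi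
  have hz : z = (listPow v m).take z.length := List.prefix_iff_eq_take.mp h
  have hlen : z.length ≤ (listPow v m).length := h.length_le
  have h1 : i < m * v.length := by rw [listPow_length] at hlen; omega
  have h2 : i + v.length < m * v.length := by rw [listPow_length] at hlen; omega
  rw [hz]
  rw [List.getElem?_take, List.getElem?_take, if_pos (by omega), if_pos (by omega)]
  rw [getElem?_listPow _ _ _ h1, getElem?_listPow _ _ _ h2, Nat.add_mod_right]

/-- Fine–Wilf step: subtract the smaller period. -/
lemma hasPer_sub {z : List A} {p q : ℕ} (hp : HasPer z p) (hq : HasPer z q)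
    (hpq : p ≤ q) (hlen : p + q ≤ z.length) : HasPer z (q - p) := by
  intro i hi
  by_cases hc : i + q < z.length
  · have e1 := hq i hc
    have e2 := hp (i + (q - p)) (by omega)
    rw [show i + (q - p) + p = i + q by omega] at e2
    rw [e1, e2]
  · have h1 : p ≤ i := by omega
    have e1 := hp (i - p) (by omega)
    rw [show i - p + p = i by omega] at e1
    have e2 := hq (i - p) (by omega)
    rw [show i - p + q = i + (q - p) by omega] at e2
    rw [← e1, e2]

/-- Fine–Wilf theorem. -/
lemma fineWilf : ∀ N : ℕ, ∀ z : List A, ∀ p q : ℕ, p + q ≤ N →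
    1 ≤ p → 1 ≤ q → p + q ≤ z.length → HasPer z p → HasPer z q →
    HasPer z (Nat.gcd p q) := by
  intro N
  induction N using Nat.strong_induction_on with
  | _ N ih =>
    intro z p q hN hp1 hq1 hlen hp hq
    rcases Nat.lt_trichotomy p q with h | h | h
    · have hsub : HasPer z (q - p) := hasPer_sub hp hq h.le hlen
      have := ih (p + (q - p)) (by omega) z p (q - p) le_rfl hp1 (by omega)
        (by omega) hp hsub
      rwa [Nat.gcd_sub_self_right h.le] at this
    · subst h; rwa [Nat.gcd_self]
    · have hsub : HasPer z (p - q) := hasPer_sub hq hp h.le (by omega)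
      have := ih (q + (p - q)) (by omega) z q (p - q) le_rfl hq1 (by omega)
        (by omega) hq hsub
      rwa [Nat.gcd_sub_self_right h.le, Nat.gcd_comm] at this

/-- With period `g`, every entry equals the entry at `i % g`. -/
lemma getElem?_mod {z : List A} {g : ℕ} (hg : 1 ≤ g) (hper : HasPer z g) :
    ∀ i : ℕ, i < z.length → z[i]? = z[i % g]? := by
  intro i
  induction i using Nat.strong_induction_on with
  | _ i ih =>
    intro hi
    by_cases hc : i < g
    · rw [Nat.mod_eq_of_lt hc]
    · push_neg at hc
      have e1 := hper (i - g) (by omega)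
      rw [show i - g + g = i by omega] at e1
      rw [← e1, ih (i - g) (by omega) (by omega), ← Nat.mod_eq_sub_mod hc]

end PeriodicityAux

open PeriodicityAux in
theorem periodicity_lemma {A : Type*} (z u v : List A)
    (hu : IsPeriodWord u z) (hv : IsPeriodWord v z)
    (hlen : u.length + v.length ≤ z.length) :
    ∃ w : List A, IsPeriodWord w z ∧
      ∃ s t : ℕ, u = listPow w s ∧ v = listPow w t := by
  obtain ⟨n, hn1, hnpre, hnsuf⟩ := hu
  obtain ⟨m, hm1, hmpre, hmsuf⟩ := hv
  -- degenerate cases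
  by_cases hue : u = []
  · subst hue
    rw [listPow_nil, List.prefix_nil] at hnsuf
    have hv0 : v = [] := by
      have := hlen
      rw [hnsuf] at this
      simpa using List.length_eq_zero_iff.mp (by simpa using this)
    subst hnsuf hv0
    exact ⟨[], ⟨1, le_rfl, by simp [listPow_nil], by simp [listPow_nil]⟩,
      1, 1, by simp [listPow_nil], by simp [listPow_nil]⟩
  by_cases hve : v = []
  · subst hve
    rw [listPow_nil, List.prefix_nil] at hmsuf
    have hu0 : u = [] := by
      have := hlen
      rw [hmsuf] at this
      simpa using List.length_eq_zero_iff.mp (by simpa using this)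
    exact absurd hu0 hue
  -- main case
  set p := u.length with hp
  set q := v.length with hq
  have hp1 : 1 ≤ p := List.length_pos_iff.mpr hue
  have hq1 : 1 ≤ q := List.length_pos_iff.mpr hve
  have hPu : HasPer z p := hasPer_of_prefix_listPow hnsuf
  have hPv : HasPer z q := hasPer_of_prefix_listPow hmsuf
  set g := Nat.gcd p q with hg
  have hg1 : 1 ≤ g := Nat.gcd_pos_of_pos_left q hp1
  have hgp : g ∣ p := Nat.gcd_dvd_left p q
  have hgq : g ∣ q := Nat.gcd_dvd_right p q
  have hgle : g ≤ p := Nat.le_of_dvd hp1 hgp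
  have hPg : HasPer z g := fineWilf (p + q) z p q le_rfl hp1 hq1 hlen hPu hPv
  have hmod := getElem?_mod hg1 hPg
  set w := z.take g with hw
  have hwlen : w.length = g := by
    rw [hw, List.length_take]; omega
  -- key: entries of any listPow w k agree with z via mod
  have hkey : ∀ k i, i < k * g → (listPow w k)[i]? = z[i % g]? := by
    intro k i hi
    rw [getElem?_listPow w k i (by rwa [hwlen]), hwlen, hw,
      List.getElem?_take, if_pos (Nat.mod_lt i hg1)]
  -- w is a period of z
  have hwz : IsPeriodWord w z := by
    refine ⟨z.length / g, Nat.one_le_div_iff hg1 |>.mpr (by omega), ?_, ?_⟩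
    · rw [List.prefix_iff_eq_take]
      apply List.ext_getElem?
      intro i
      have hL : (listPow w (z.length / g)).length = z.length / g * g := by
        rw [listPow_length, hwlen]
      by_cases hc : i < z.length / g * g
      · rw [hkey _ _ hc, List.getElem?_take, hL, if_pos hc,
          ← hmod i (lt_of_lt_of_le hc (Nat.div_mul_le_self _ _))]
      · rw [List.getElem?_eq_none (by omega), List.getElem?_eq_none
          (by rw [List.length_take, hL]; omega)]
    · rw [List.prefix_iff_eq_take]
      apply List.ext_getElem?
      intro i
      have hL : (listPow w (z.length / g + 1)).length = (z.length / g + 1) * g := by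
        rw [listPow_length, hwlen]
      have hzlt : z.length < (z.length / g + 1) * g := by
        have h1 := Nat.div_add_mod z.length g
        have h2 := Nat.mod_lt z.length hg1
        rw [Nat.succ_mul, Nat.mul_comm]; omega
      by_cases hc : i < z.length
      · rw [List.getElem?_take, if_pos hc, hkey _ _ (by omega), ← hmod i hc]
      · rw [List.getElem?_eq_none (by omega),
          List.getElem?_eq_none (by rw [List.length_take]; omega)]
  -- u = w^(p/g)
  have hupre : u <+: z := (listPow_one u ▸ listPow_prefix_mono u hn1).trans hnpre
  have hvpre : v <+: z := (listPow_one v ▸ listPow_prefix_mono v hm1).trans hmpre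
  have hmk : ∀ (x : List A), x <+: z → g ∣ x.length → x = listPow w (x.length / g) := by
    intro x hx hdvd
    have hxlen : x.length ≤ z.length := hx.length_le
    have hxe : x.length / g * g = x.length := Nat.div_mul_cancel hdvd
    rw [List.prefix_iff_eq_take] at hx
    conv_lhs => rw [hx]
    apply List.ext_getElem?
    intro i
    by_cases hc : i < x.length
    · rw [hkey _ _ (by omega), List.getElem?_take, if_pos hc, ← hmod i (by omega)]
    · rw [List.getElem?_eq_none (by rw [List.length_take]; omega),
        List.getElem?_eq_none (by rw [listPow_length, hwlen]; omega)]
  exact ⟨w, hwz, p / g, q / g, hmk u hupre hgp, hmk v hvpre hgq⟩
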